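/- Fix λ, χ, Θ > 0, δ > 0, ε ≥ 0, and N ∈ ℕ. There exist constants 𝒞 > 0 and C > 0, independent of N, such that for every zero-mean h ∈ A⁶(𝕋) with ‖h‖_{A¹} ≤ 𝒞, there exists a unique zero-mean U ∈ A⁴(𝕋) satisfying L_h U = N^N_{δ,ε}(h), and this U obeys the bound ‖U‖_{A⁰} + (√δ Θ/2) ‖U‖_{A⁴} ≤ C √δ ( (1 + ‖h‖_{A⁰}) (‖h‖_{A²} + ‖P_N h‖_{A⁶}) + ‖h‖_{A¹} ‖P_N h‖_{A⁵} ). -/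

import Mathlib

open scoped BigOperators
open MeasureTheory Filter

noncomputable section

/-- A zero-mean periodic function, identified with its sequence of Fourier coefficients. -/
abbrev Coeffs := ℤ → ℂ

/-- Wiener norm `‖f‖_{A^s} = Σ_k |k|^s |f̂(k)|`. -/
def Anorm (s : ℝ) (f : Coeffs) : ℝ :=
  ∑' k : ℤ, |(k : ℝ)| ^ s * ‖f k‖

/-- Membership in the Wiener space `A^s`. -/
def InA (s : ℝ) (f : Coeffs) : Prop :=
  Summable fun k : ℤ => |(k : ℝ)| ^ s * ‖f k‖

/-- `G₀ = Λ tanh Λ`, the Fourier multiplier with symbol `|k| tanh |k|`. -/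
def G0 (f : Coeffs) : Coeffs := fun k =>
  ((|(k : ℝ)| * Real.tanh |(k : ℝ)| : ℝ) : ℂ) * f k

/-- The `n`-th spatial derivative `∂ₓⁿ`, i.e. the multiplier with symbol `(i k)^n`. -/
def Dx (n : ℕ) (f : Coeffs) : Coeffs := fun k =>
  (Complex.I * (k : ℂ)) ^ n * f k

/-- Product of periodic functions = convolution of Fourier coefficient sequences. -/
def conv (f g : Coeffs) : Coeffs := fun k => ∑' m : ℤ, f m * g (k - m)

/-- `L₀ = 1 - Θ G₀ ∂ₓₓ`, the multiplier with symbol `1 + Θ |k|³ tanh |k|`. -/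
def L0 (Θ : ℝ) (f : Coeffs) : Coeffs := fun k =>
  ((1 + Θ * |(k : ℝ)| ^ (3 : ℕ) * Real.tanh |(k : ℝ)| : ℝ) : ℂ) * f k

/-- `L₀⁻¹`, the multiplier with symbol `(1 + Θ |k|³ tanh |k|)⁻¹`. -/
def L0inv (Θ : ℝ) (f : Coeffs) : Coeffs := fun k =>
  f k / ((1 + Θ * |(k : ℝ)| ^ (3 : ℕ) * Real.tanh |(k : ℝ)| : ℝ) : ℂ)

/-- `I(h,V) = G₀(h · G₀ ∂ₓₓ V) + ∂ₓ(h · ∂ₓₓₓ V)`. -/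
def Iop (h V : Coeffs) : Coeffs := fun k =>
  G0 (conv h (G0 (Dx 2 V))) k + Dx 1 (conv h (Dx 3 V)) k

/-- `I(h,V)` given directly by its Fourier coefficient formula. -/
def IopF (h V : Coeffs) : Coeffs := fun k =>
  ∑' m : ℤ,
    ((|(k : ℝ)| * |((k - m : ℤ) : ℝ)| ^ (3 : ℕ) *
      ((Int.sign k : ℝ) * (Int.sign (k - m) : ℝ) -
        Real.tanh |(k : ℝ)| * Real.tanh |((k - m : ℤ) : ℝ)|) : ℝ) : ℂ) *
      h m * V (k - m)

/-- The sign-interaction part `I_A`. -/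
def IA (h V : Coeffs) : Coeffs := fun k =>
  ∑' m : ℤ,
    ((|(k : ℝ)| * |((k - m : ℤ) : ℝ)| ^ (3 : ℕ) *
      ((Int.sign k : ℝ) * (Int.sign (k - m) : ℝ) - 1) : ℝ) : ℂ) *
      h m * V (k - m)

/-- The smooth-remainder part `I_B`. -/
def IB (h V : Coeffs) : Coeffs := fun k =>
  ∑' m : ℤ,
    ((|(k : ℝ)| * |((k - m : ℤ) : ℝ)| ^ (3 : ℕ) *
      (1 - Real.tanh |(k : ℝ)| * Real.tanh |((k - m : ℤ) : ℝ)|) : ℝ) : ℂ) *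
      h m * V (k - m)

/-- For a given profile `h`, the operator `L_h U = L₀ U + σ Θ I(h,U)`. -/
def Lop (Θ σ : ℝ) (h U : Coeffs) : Coeffs := fun k =>
  L0 Θ U k + ((σ * Θ : ℝ) : ℂ) * Iop h U k

/-- `N(h) = -χ G₀ h + σχ (G₀(h · G₀ h) + ∂ₓ(h · ∂ₓ h))`. -/
def Nop (χ σ : ℝ) (h : Coeffs) : Coeffs := fun k =>
  -(χ : ℂ) * G0 h k +
    ((σ * χ : ℝ) : ℂ) * (G0 (conv h (G0 h)) k + Dx 1 (conv h (Dx 1 h)) k)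

/-- `N_λ(h)`, the weakly nonlinear right-hand side with elasticity. -/
def Nlam (lam χ σ : ℝ) (h : Coeffs) : Coeffs := fun k =>
  -(χ : ℂ) * G0 h k - ((lam / 4 : ℝ) : ℂ) * G0 (Dx 4 h) k
    + ((σ * χ : ℝ) : ℂ) * (G0 (conv h (G0 h)) k + Dx 1 (conv h (Dx 1 h)) k)
    + ((σ * lam / 4 : ℝ) : ℂ) *
        (G0 (conv h (G0 (Dx 4 h))) k + Dx 1 (conv h (Dx 5 h)) k)

/-- Fourier projection onto modes `|k| ≤ N`. -/
def PN (N : ℕ) (f : Coeffs) : Coeffs := fun k => if |k| ≤ (N : ℤ) then f k else 0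

/-- Truncated nonlinearity `F_N(h)` of the Galerkin approximation. -/
def FN (lam χ σ : ℝ) (N : ℕ) (h : Coeffs) : Coeffs := fun k =>
  -(χ : ℂ) * G0 h k - ((lam / 4 : ℝ) : ℂ) * G0 (Dx 4 (PN N h)) k
    + ((σ * χ : ℝ) : ℂ) * (G0 (conv h (G0 h)) k + Dx 1 (conv h (Dx 1 h)) k)
    + ((σ * lam / 4 : ℝ) : ℂ) *
        (G0 (conv h (G0 (Dx 4 (PN N h)))) k + Dx 1 (conv h (Dx 5 (PN N h))) k)

/-- `μ = L₀⁻¹(-χ G₀ h - (λ/4) G₀ ∂ₓ⁴ h)`. -/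
def muOf (lam χ Θ : ℝ) (h : Coeffs) : Coeffs :=
  L0inv Θ (fun k => -(χ : ℂ) * G0 h k - ((lam / 4 : ℝ) : ℂ) * G0 (Dx 4 h) k)

/-- Right-hand side of the second weakly nonlinear model (integrated form). -/
def RHS2 (lam χ Θ σ : ℝ) (h : Coeffs) : Coeffs :=
  L0inv Θ (fun k => Nlam lam χ σ h k - ((σ * Θ : ℝ) : ℂ) *
    (G0 (conv h (G0 (Dx 2 (muOf lam χ Θ h)))) k +
      Dx 1 (conv h (Dx 3 (muOf lam χ Θ h))) k))

/-- Thin-film operator `L_h U = U + √δ Θ ∂ₓ((1+εh) ∂ₓ³ U)`. -/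
def Lthin (δ Θ ε : ℝ) (h U : Coeffs) : Coeffs := fun k =>
  U k + ((Real.sqrt δ * Θ : ℝ) : ℂ) *
    Dx 1 (fun j => Dx 3 U j + (ε : ℂ) * conv h (Dx 3 U) j) k

/-- Thin-film nonlinearity `N_{δ,ε}(h) = √δ ∂ₓ((1+εh) ∂ₓ(χh + (λ/4)∂ₓ⁴h))`. -/
def Nthin (δ ε χ lam : ℝ) (h : Coeffs) : Coeffs :=
  fun k => ((Real.sqrt δ : ℝ) : ℂ) *
    Dx 1 (fun j =>
      Dx 1 (fun m => (χ : ℂ) * h m + ((lam / 4 : ℝ) : ℂ) * Dx 4 h m) j +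
      (ε : ℂ) * conv h (Dx 1 (fun m => (χ : ℂ) * h m + ((lam / 4 : ℝ) : ℂ) * Dx 4 h m)) j) k

/-- Truncated thin-film nonlinearity `N^N_{δ,ε}(h)`. -/
def NthinN (δ ε χ lam : ℝ) (N : ℕ) (h : Coeffs) : Coeffs :=
  fun k => ((Real.sqrt δ : ℝ) : ℂ) *
    Dx 1 (fun j =>
      Dx 1 (fun m => (χ : ℂ) * h m + ((lam / 4 : ℝ) : ℂ) * Dx 4 (PN N h) m) j +
      (ε : ℂ) * conv h (Dx 1 (fun m => (χ : ℂ) * h m + ((lam / 4 : ℝ) : ℂ) * Dx 4 (PN N h) m)) j) k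

/-- Inverse of `L⋆ = I + √δ Θ ∂ₓ⁴`, the multiplier with symbol `(1 + √δ Θ k⁴)⁻¹`. -/
def LstarInv (δ Θ : ℝ) (f : Coeffs) : Coeffs := fun k =>
  f k / ((1 + Real.sqrt δ * Θ * (k : ℝ) ^ (4 : ℕ) : ℝ) : ℂ)

/-- Continuity of a curve of coefficients with respect to the `A^s` norm, on a set `S ⊆ ℝ`. -/
def ContOnA (s : ℝ) (S : Set ℝ) (h : ℝ → Coeffs) : Prop :=
  ∀ t ∈ S, ∀ ε > 0, ∃ δ > 0, ∀ t' ∈ S, |t' - t| < δ →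
    Anorm s (fun k => h t' k - h t k) < ε

namespace TFAux

lemma slice_summable {a b : ℤ → ℝ} (ha0 : ∀ m, 0 ≤ a m) (hb0 : ∀ j, 0 ≤ b j)
    (hA : Summable a) (hB : Summable b) (k : ℤ) :
    Summable fun m => a m * b (k - m) := by
  refine Summable.of_nonneg_of_le (fun m => mul_nonneg (ha0 m) (hb0 _))
    (fun m => mul_le_mul_of_nonneg_left (Summable.le_tsum hB _ fun i _ => hb0 i) (ha0 m))
    (hA.mul_right (∑' j, b j))

lemma conv_l1 {a b : ℤ → ℝ} (ha0 : ∀ m, 0 ≤ a m) (hb0 : ∀ j, 0 ≤ b j)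
    (hA : Summable a) (hB : Summable b) :
    Summable (fun k : ℤ => ∑' m : ℤ, a m * b (k - m)) ∧
      ∑' k : ℤ, ∑' m : ℤ, a m * b (k - m) ≤ (∑' m, a m) * ∑' j, b j := by
  have hks := slice_summable ha0 hb0 hA hB
  have key : ∀ k : ℤ, ENNReal.ofReal (∑' m, a m * b (k - m))
      = ∑' m, ENNReal.ofReal (a m) * ENNReal.ofReal (b (k - m)) := by
    intro k
    rw [ENNReal.ofReal_tsum_of_nonneg (fun m => mul_nonneg (ha0 m) (hb0 _)) (hks k)]
    exact tsum_congr fun m => ENNReal.ofReal_mul (ha0 m)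
  have big : (∑' k : ℤ, ∑' m : ℤ, ENNReal.ofReal (a m) * ENNReal.ofReal (b (k - m)))
      = ENNReal.ofReal (∑' m, a m) * ENNReal.ofReal (∑' j, b j) := by
    rw [ENNReal.tsum_comm]
    calc (∑' m : ℤ, ∑' k : ℤ, ENNReal.ofReal (a m) * ENNReal.ofReal (b (k - m)))
        = ∑' m : ℤ, ENNReal.ofReal (a m) * ∑' k : ℤ, ENNReal.ofReal (b (k - m)) :=
          tsum_congr fun m => ENNReal.tsum_mul_left
      _ = ∑' m : ℤ, ENNReal.ofReal (a m) * ∑' j : ℤ, ENNReal.ofReal (b j) := by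
          refine tsum_congr fun m => ?_
          congr 1
          exact (Equiv.subRight m).tsum_eq fun j => ENNReal.ofReal (b j)
      _ = (∑' m : ℤ, ENNReal.ofReal (a m)) * ∑' j : ℤ, ENNReal.ofReal (b j) :=
          ENNReal.tsum_mul_right
      _ = _ := by
          rw [ENNReal.ofReal_tsum_of_nonneg ha0 hA, ENNReal.ofReal_tsum_of_nonneg hb0 hB]
  have hnn : ∀ k : ℤ, 0 ≤ ∑' m, a m * b (k - m) :=
    fun k => tsum_nonneg fun m => mul_nonneg (ha0 m) (hb0 _)
  have fin : (∑' k : ℤ, ENNReal.ofReal (∑' m, a m * b (k - m))) ≠ ⊤ := by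
    rw [tsum_congr key, big]
    exact ENNReal.mul_ne_top ENNReal.ofReal_ne_top ENNReal.ofReal_ne_top
  have hsum : Summable fun k : ℤ => ∑' m, a m * b (k - m) := by
    have hs := ENNReal.summable_toReal fin
    exact hs.congr fun k => ENNReal.toReal_ofReal (hnn k)
  refine ⟨hsum, ?_⟩
  have heq : ENNReal.ofReal (∑' k : ℤ, ∑' m, a m * b (k - m))
      = ENNReal.ofReal ((∑' m, a m) * ∑' j, b j) := by
    rw [ENNReal.ofReal_tsum_of_nonneg hnn hsum, tsum_congr key, big,
      ENNReal.ofReal_mul (tsum_nonneg ha0)]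
  have h2 := congrArg ENNReal.toReal heq
  rw [ENNReal.toReal_ofReal (tsum_nonneg hnn), ENNReal.toReal_ofReal
    (mul_nonneg (tsum_nonneg ha0) (tsum_nonneg hb0))] at h2
  exact h2.le


lemma weighted_conv_bound {f g : Coeffs} {w a b : ℤ → ℝ}
    (hw : ∀ k, 0 ≤ w k) (ha0 : ∀ m, 0 ≤ a m) (hb0 : ∀ j, 0 ≤ b j)
    (hA : Summable a) (hB : Summable b)
    (hfg : ∀ k, Summable fun m => ‖f m‖ * ‖g (k - m)‖)
    (hpt : ∀ k m, w k * (‖f m‖ * ‖g (k - m)‖) ≤ a m * b (k - m)) :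
    Summable (fun k => w k * ‖conv f g k‖) ∧
      ∑' k, w k * ‖conv f g k‖ ≤ (∑' m, a m) * ∑' j, b j := by
  have hks := slice_summable ha0 hb0 hA hB
  have hmaj : ∀ k, w k * ‖conv f g k‖ ≤ ∑' m, a m * b (k - m) := by
    intro k
    calc w k * ‖conv f g k‖ ≤ w k * ∑' m, ‖f m‖ * ‖g (k - m)‖ := by
          refine mul_le_mul_of_nonneg_left ?_ (hw k)
          calc ‖conv f g k‖ ≤ ∑' m, ‖f m * g (k - m)‖ :=
                norm_tsum_le_tsum_norm (by simpa [norm_mul] using hfg k)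
            _ = ∑' m, ‖f m‖ * ‖g (k - m)‖ := tsum_congr fun m => norm_mul _ _
      _ = ∑' m, w k * (‖f m‖ * ‖g (k - m)‖) := tsum_mul_left.symm
      _ ≤ ∑' m, a m * b (k - m) := Summable.tsum_le_tsum (hpt k) ((hfg k).mul_left (w k)) (hks k)
  obtain ⟨hcs, hcb⟩ := conv_l1 ha0 hb0 hA hB
  have h1 : Summable fun k => w k * ‖conv f g k‖ :=
    hcs.of_nonneg_of_le (fun k => mul_nonneg (hw k) (norm_nonneg _)) hmaj
  exact ⟨h1, (Summable.tsum_le_tsum hmaj h1 hcs).trans hcb⟩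


/- ### basic norm computations -/

lemma one_le_abs_cast {k : ℤ} (hk : k ≠ 0) : (1 : ℝ) ≤ |(k : ℝ)| := by
  have : (1 : ℤ) ≤ |k| := Int.one_le_abs hk
  calc (1:ℝ) = ((1:ℤ):ℝ) := by norm_num
    _ ≤ ((|k|:ℤ):ℝ) := by exact_mod_cast this
    _ = |(k:ℝ)| := by push_cast; ring

lemma abs_pow_mono {a b : ℕ} (ha : 0 < a) (hab : a ≤ b) (j : ℤ) :
    |(j:ℝ)| ^ a ≤ |(j:ℝ)| ^ b := by
  rcases eq_or_ne j 0 with rfl | hj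
  · simp [zero_pow ha.ne', zero_pow (by omega : b ≠ 0)]
  · exact pow_le_pow_right₀ (one_le_abs_cast hj) hab

lemma norm_I_int (k : ℤ) : ‖Complex.I * (k : ℂ)‖ = |(k : ℝ)| := by
  rw [norm_mul, Complex.norm_I, one_mul, Complex.norm_intCast]

lemma norm_Dx (n : ℕ) (f : Coeffs) (k : ℤ) : ‖Dx n f k‖ = |(k:ℝ)| ^ n * ‖f k‖ := by
  rw [Dx, norm_mul, norm_pow, norm_I_int]

def qw (δ Θ : ℝ) (k : ℤ) : ℝ := 1 + Real.sqrt δ * Θ * (k:ℝ) ^ (4:ℕ)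

lemma qw_nonneg_aux {δ Θ : ℝ} (hΘ : 0 ≤ Θ) (k : ℤ) :
    0 ≤ Real.sqrt δ * Θ * (k:ℝ) ^ (4:ℕ) :=
  mul_nonneg (mul_nonneg (Real.sqrt_nonneg δ) hΘ) (by positivity)

lemma one_le_qw {δ Θ : ℝ} (hΘ : 0 ≤ Θ) (k : ℤ) : 1 ≤ qw δ Θ k := by
  have := qw_nonneg_aux (δ := δ) hΘ k; unfold qw; linarith

lemma qw_pos {δ Θ : ℝ} (hΘ : 0 ≤ Θ) (k : ℤ) : 0 < qw δ Θ k :=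
  lt_of_lt_of_le one_pos (one_le_qw hΘ k)

lemma abs_pow_four (j : ℤ) : |(j:ℝ)| ^ (4:ℕ) = (j:ℝ) ^ (4:ℕ) := by
  rw [← abs_pow, abs_of_nonneg (by positivity)]

lemma s_abs4_le_qw {δ Θ : ℝ} (k : ℤ) :
    Real.sqrt δ * Θ * |(k:ℝ)| ^ (4:ℕ) ≤ qw δ Θ k := by
  rw [abs_pow_four]; unfold qw; linarith

lemma norm_LstarInv {δ Θ : ℝ} (hΘ : 0 ≤ Θ) (V : Coeffs) (k : ℤ) :
    ‖LstarInv δ Θ V k‖ = ‖V k‖ / qw δ Θ k := by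
  rw [LstarInv,
    show ((1 + Real.sqrt δ * Θ * (k:ℝ) ^ (4:ℕ) : ℝ) : ℂ) = ((qw δ Θ k : ℝ) : ℂ) from rfl,
    norm_div, Complex.norm_real, Real.norm_eq_abs, abs_of_pos (qw_pos hΘ k)]

/- ### expansion of `Lthin` and `NthinN` -/

lemma I_int_pow_four (k : ℤ) : (Complex.I * (k:ℂ)) ^ (4:ℕ) = (k:ℂ) ^ (4:ℕ) := by
  rw [mul_pow]
  norm_num [pow_succ, Complex.I_mul_I]

lemma Lthin_expand (δ Θ ε : ℝ) (h U : Coeffs) (k : ℤ) :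
    Lthin δ Θ ε h U k =
      ((qw δ Θ k : ℝ) : ℂ) * U k +
        ((Real.sqrt δ * Θ * ε : ℝ) : ℂ) * (Complex.I * (k:ℂ)) * conv h (Dx 3 U) k := by
  have h4 := I_int_pow_four k
  simp only [Lthin, Dx, pow_one, qw]
  push_cast
  linear_combination (((Real.sqrt δ : ℂ) * Θ) * U k) * h4

def Pfun (χ lam : ℝ) (N : ℕ) (h : Coeffs) : Coeffs :=
  fun m => (χ : ℂ) * h m + ((lam / 4 : ℝ) : ℂ) * Dx 4 (PN N h) m

lemma NthinN_expand (δ ε χ lam : ℝ) (N : ℕ) (h : Coeffs) (k : ℤ) :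
    NthinN δ ε χ lam N h k =
      ((Real.sqrt δ : ℝ) : ℂ) * (Complex.I * (k:ℂ)) *
        ((Complex.I * (k:ℂ)) * Pfun χ lam N h k +
          (ε : ℂ) * conv h (Dx 1 (Pfun χ lam N h)) k) := by
  show ((Real.sqrt δ : ℝ) : ℂ) *
      Dx 1 (fun j => Dx 1 (Pfun χ lam N h) j +
        (ε : ℂ) * conv h (Dx 1 (Pfun χ lam N h)) j) k = _
  simp only [Dx, pow_one]
  ring

end TFAux

namespace TFAux2
open TFAux

/- ### the perturbation operator -/

def Bop (δ Θ ε : ℝ) (h V : Coeffs) : Coeffs := fun k =>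
  ((Real.sqrt δ * Θ * ε : ℝ) : ℂ) * (Complex.I * (k:ℂ)) *
    conv h (Dx 3 (LstarInv δ Θ V)) k

lemma norm_Bop {δ Θ ε : ℝ} (hΘ : 0 ≤ Θ) (hε : 0 ≤ ε) (h V : Coeffs) (k : ℤ) :
    ‖Bop δ Θ ε h V k‖ =
      (Real.sqrt δ * Θ * ε * |(k:ℝ)|) * ‖conv h (Dx 3 (LstarInv δ Θ V)) k‖ := by
  rw [Bop, norm_mul, norm_mul, Complex.norm_real, Real.norm_eq_abs, norm_I_int,
    abs_of_nonneg (mul_nonneg (mul_nonneg (Real.sqrt_nonneg δ) hΘ) hε)]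

lemma W_norm_eq {δ Θ : ℝ} (hΘ : 0 ≤ Θ) (V : Coeffs) (j : ℤ) :
    ‖Dx 3 (LstarInv δ Θ V) j‖ = |(j:ℝ)| ^ (3:ℕ) * (‖V j‖ / qw δ Θ j) := by
  rw [norm_Dx, norm_LstarInv hΘ]

lemma W_le {δ Θ : ℝ} (hδ : 0 < δ) (hΘ : 0 < Θ) (V : Coeffs) (j : ℤ) :
    ‖Dx 3 (LstarInv δ Θ V) j‖ ≤ (Real.sqrt δ * Θ)⁻¹ * ‖V j‖ := by
  have hs : 0 < Real.sqrt δ * Θ := mul_pos (Real.sqrt_pos.mpr hδ) hΘ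
  have hq := qw_pos (δ := δ) hΘ.le j
  have h34 : |(j:ℝ)| ^ (3:ℕ) ≤ |(j:ℝ)| ^ (4:ℕ) := abs_pow_mono (by norm_num) (by norm_num) j
  have h3 : Real.sqrt δ * Θ * |(j:ℝ)| ^ (3:ℕ) ≤ qw δ Θ j :=
    le_trans (mul_le_mul_of_nonneg_left h34 hs.le) (s_abs4_le_qw j)
  have h3' : |(j:ℝ)| ^ (3:ℕ) ≤ (Real.sqrt δ * Θ)⁻¹ * qw δ Θ j := by
    rw [← div_eq_inv_mul]
    exact (le_div_iff₀' hs).mpr h3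
  rw [W_norm_eq hΘ.le]
  calc |(j:ℝ)| ^ (3:ℕ) * (‖V j‖ / qw δ Θ j)
      ≤ ((Real.sqrt δ * Θ)⁻¹ * qw δ Θ j) * (‖V j‖ / qw δ Θ j) :=
        mul_le_mul_of_nonneg_right h3' (div_nonneg (norm_nonneg _) hq.le)
    _ = (Real.sqrt δ * Θ)⁻¹ * ‖V j‖ := by field_simp

lemma conv_slice_summable {h W : Coeffs} (hh0 : Summable fun m => ‖h m‖) {C : ℝ}
    (hW : ∀ j, ‖W j‖ ≤ C) (k : ℤ) : Summable fun m => ‖h m‖ * ‖W (k - m)‖ :=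
  Summable.of_nonneg_of_le (fun m => mul_nonneg (norm_nonneg _) (norm_nonneg _))
    (fun m => mul_le_mul_of_nonneg_left (hW _) (norm_nonneg _)) (hh0.mul_right C)

lemma hk_factor (k m : ℤ) : |(k:ℝ)| ≤ (1 + |(m:ℝ)|) * (1 + |((k - m : ℤ):ℝ)|) := by
  have hk : (k:ℝ) = (m:ℝ) + ((k - m : ℤ):ℝ) := by push_cast; ring
  calc |(k:ℝ)| = |(m:ℝ) + ((k - m : ℤ):ℝ)| := by rw [← hk]
    _ ≤ |(m:ℝ)| + |((k - m : ℤ):ℝ)| := abs_add_le _ _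
    _ ≤ (1 + |(m:ℝ)|) * (1 + |((k - m : ℤ):ℝ)|) := by
        nlinarith [abs_nonneg (m:ℝ), abs_nonneg ((k - m : ℤ):ℝ)]

lemma Bop_bound {δ Θ ε : ℝ} (hδ : 0 < δ) (hΘ : 0 < Θ) (hε : 0 ≤ ε) (h V : Coeffs)
    (hh1 : Summable fun m : ℤ => (1 + |(m:ℝ)|) * ‖h m‖)
    (hV : Summable fun k => ‖V k‖) :
    Summable (fun k => ‖Bop δ Θ ε h V k‖) ∧
      ∑' k, ‖Bop δ Θ ε h V k‖ ≤
        (ε * ∑' m : ℤ, (1 + |(m:ℝ)|) * ‖h m‖) * (2 * ∑' k, ‖V k‖) := by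
  have hs : 0 < Real.sqrt δ * Θ := mul_pos (Real.sqrt_pos.mpr hδ) hΘ
  have hh0 : Summable fun m => ‖h m‖ :=
    hh1.of_nonneg_of_le (fun m => norm_nonneg _)
      (fun m => le_mul_of_one_le_left (norm_nonneg _) (le_add_of_nonneg_right (abs_nonneg _)))
  have hWle : ∀ j, ‖Dx 3 (LstarInv δ Θ V) j‖ ≤ (Real.sqrt δ * Θ)⁻¹ * ∑' i, ‖V i‖ :=
    fun j => (W_le hδ hΘ V j).trans (mul_le_mul_of_nonneg_left
      (Summable.le_tsum hV j fun i _ => norm_nonneg _) (inv_nonneg.2 hs.le))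
  have hfg := conv_slice_summable hh0 hWle
  have ha0 : ∀ m : ℤ, 0 ≤ ε * ((1 + |(m:ℝ)|) * ‖h m‖) := fun m => by positivity
  have hb0 : ∀ j : ℤ, 0 ≤ 2 * ‖V j‖ := fun j => by positivity
  have hpt : ∀ (k m : ℤ), (Real.sqrt δ * Θ * ε * |(k:ℝ)|) *
      (‖h m‖ * ‖Dx 3 (LstarInv δ Θ V) (k - m)‖) ≤
      (ε * ((1 + |(m:ℝ)|) * ‖h m‖)) * (2 * ‖V (k - m)‖) := by
    intro k m
    have hq := qw_pos (δ := δ) hΘ.le (k - m)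
    have hk1 := hk_factor k m
    have h34 : |((k - m : ℤ):ℝ)| ^ (3:ℕ) ≤ |((k - m : ℤ):ℝ)| ^ (4:ℕ) :=
      abs_pow_mono (by norm_num) (by norm_num) _
    have hq4 : Real.sqrt δ * Θ * |((k - m : ℤ):ℝ)| ^ (4:ℕ) ≤ qw δ Θ (k - m) := s_abs4_le_qw _
    have hq3 : Real.sqrt δ * Θ * |((k - m : ℤ):ℝ)| ^ (3:ℕ) ≤ qw δ Θ (k - m) :=
      le_trans (mul_le_mul_of_nonneg_left h34 hs.le) hq4
    have key : Real.sqrt δ * Θ * |(k:ℝ)| * |((k - m : ℤ):ℝ)| ^ (3:ℕ) ≤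
        (1 + |(m:ℝ)|) * (2 * qw δ Θ (k - m)) := by
      calc Real.sqrt δ * Θ * |(k:ℝ)| * |((k - m : ℤ):ℝ)| ^ (3:ℕ)
          ≤ Real.sqrt δ * Θ * ((1 + |(m:ℝ)|) * (1 + |((k - m : ℤ):ℝ)|)) *
              |((k - m : ℤ):ℝ)| ^ (3:ℕ) :=
            mul_le_mul_of_nonneg_right (mul_le_mul_of_nonneg_left hk1 hs.le)
              (by positivity)
        _ = (1 + |(m:ℝ)|) * (Real.sqrt δ * Θ * |((k - m : ℤ):ℝ)| ^ (3:ℕ) +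
              Real.sqrt δ * Θ * |((k - m : ℤ):ℝ)| ^ (4:ℕ)) := by ring
        _ ≤ (1 + |(m:ℝ)|) * (2 * qw δ Θ (k - m)) := by
            have hm0 : (0:ℝ) ≤ 1 + |(m:ℝ)| := by positivity
            nlinarith [hq3, hq4]
    have e1 := W_norm_eq (δ := δ) hΘ.le V (k - m)
    calc (Real.sqrt δ * Θ * ε * |(k:ℝ)|) * (‖h m‖ * ‖Dx 3 (LstarInv δ Θ V) (k - m)‖)
        = (ε * ‖h m‖ * (‖V (k - m)‖ / qw δ Θ (k - m))) *
            (Real.sqrt δ * Θ * |(k:ℝ)| * |((k - m : ℤ):ℝ)| ^ (3:ℕ)) := by rw [e1]; ring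
      _ ≤ (ε * ‖h m‖ * (‖V (k - m)‖ / qw δ Θ (k - m))) *
            ((1 + |(m:ℝ)|) * (2 * qw δ Θ (k - m))) :=
          mul_le_mul_of_nonneg_left key
            (mul_nonneg (mul_nonneg hε (norm_nonneg _))
              (div_nonneg (norm_nonneg _) hq.le))
      _ = (ε * ((1 + |(m:ℝ)|) * ‖h m‖)) * (2 * ‖V (k - m)‖) *
            (qw δ Θ (k - m) / qw δ Θ (k - m)) := by ring
      _ = _ := by rw [div_self hq.ne']; ring
  obtain ⟨hs1, hs2⟩ := weighted_conv_bound (w := fun k => Real.sqrt δ * Θ * ε * |(k:ℝ)|)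
    (fun k => by positivity) ha0 hb0 (hh1.mul_left ε) (hV.mul_left 2) hfg hpt
  have hBeq : ∀ k : ℤ, (Real.sqrt δ * Θ * ε * |(k:ℝ)|) *
      ‖conv h (Dx 3 (LstarInv δ Θ V)) k‖ = ‖Bop δ Θ ε h V k‖ :=
    fun k => (norm_Bop hΘ.le hε h V k).symm
  refine ⟨hs1.congr hBeq, ?_⟩
  rw [← tsum_congr hBeq]
  calc ∑' k : ℤ, (Real.sqrt δ * Θ * ε * |(k:ℝ)|) * ‖conv h (Dx 3 (LstarInv δ Θ V)) k‖
      ≤ (∑' m : ℤ, ε * ((1 + |(m:ℝ)|) * ‖h m‖)) * ∑' j : ℤ, 2 * ‖V j‖ := hs2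
    _ = (ε * ∑' m : ℤ, (1 + |(m:ℝ)|) * ‖h m‖) * (2 * ∑' k, ‖V k‖) := by
        rw [tsum_mul_left, tsum_mul_left]

end TFAux2

namespace TFAux3
open TFAux TFAux2

lemma conv_summand_summable {δ Θ : ℝ} (hδ : 0 < δ) (hΘ : 0 < Θ) {h : Coeffs}
    (hh0 : Summable fun m => ‖h m‖) {V : Coeffs} (hV : Summable fun k => ‖V k‖) (k : ℤ) :
    Summable fun m => h m * Dx 3 (LstarInv δ Θ V) (k - m) := by
  have hs : 0 < Real.sqrt δ * Θ := mul_pos (Real.sqrt_pos.mpr hδ) hΘ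
  have hWle : ∀ j, ‖Dx 3 (LstarInv δ Θ V) j‖ ≤ (Real.sqrt δ * Θ)⁻¹ * ∑' i, ‖V i‖ :=
    fun j => (W_le hδ hΘ V j).trans (mul_le_mul_of_nonneg_left
      (Summable.le_tsum hV j fun i _ => norm_nonneg _) (inv_nonneg.2 hs.le))
  exact Summable.of_norm (by
    simpa [norm_mul] using conv_slice_summable hh0 hWle k)

lemma Bop_sub {δ Θ ε : ℝ} (hδ : 0 < δ) (hΘ : 0 < Θ) (h x y : Coeffs)
    (hh0 : Summable fun m => ‖h m‖)
    (hx : Summable fun k => ‖x k‖) (hy : Summable fun k => ‖y k‖) (k : ℤ) :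
    Bop δ Θ ε h x k - Bop δ Θ ε h y k = Bop δ Θ ε h (fun j => x j - y j) k := by
  have hWsub : ∀ j : ℤ, Dx 3 (LstarInv δ Θ (fun i => x i - y i)) j =
      Dx 3 (LstarInv δ Θ x) j - Dx 3 (LstarInv δ Θ y) j := by
    intro j
    simp only [Dx, LstarInv, sub_div, mul_sub]
  have hconv : conv h (Dx 3 (LstarInv δ Θ (fun i => x i - y i))) k =
      conv h (Dx 3 (LstarInv δ Θ x)) k - conv h (Dx 3 (LstarInv δ Θ y)) k := by
    unfold conv
    rw [← Summable.tsum_sub (conv_summand_summable hδ hΘ hh0 hx k)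
      (conv_summand_summable hδ hΘ hh0 hy k)]
    exact tsum_congr fun m => by rw [hWsub]; ring
  simp only [Bop, hconv]
  ring

lemma NthinN_bound {δ ε χ lam : ℝ} (hδ : 0 < δ) (hε : 0 ≤ ε) (hχ : 0 < χ) (hlam : 0 < lam)
    (N : ℕ) (h : Coeffs)
    (hh1 : Summable fun m : ℤ => (1 + |(m:ℝ)|) * ‖h m‖)
    (hA2 : Summable fun k : ℤ => |(k:ℝ)| ^ (2:ℕ) * ‖h k‖)
    (hA6 : Summable fun k : ℤ => |(k:ℝ)| ^ (6:ℕ) * ‖PN N h k‖) :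
    Summable (fun k => ‖NthinN δ ε χ lam N h k‖) ∧
      ∑' k, ‖NthinN δ ε χ lam N h k‖ ≤
        Real.sqrt δ * (1 + 2 * (ε * ∑' m : ℤ, (1 + |(m:ℝ)|) * ‖h m‖)) *
          (χ * ∑' k : ℤ, |(k:ℝ)| ^ (2:ℕ) * ‖h k‖ +
            lam / 4 * ∑' k : ℤ, |(k:ℝ)| ^ (6:ℕ) * ‖PN N h k‖) := by
  have hsd : (0:ℝ) ≤ Real.sqrt δ := Real.sqrt_nonneg δ
  set P := Pfun χ lam N h with hP_def
  have hh0 : Summable fun m => ‖h m‖ :=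
    hh1.of_nonneg_of_le (fun m => norm_nonneg _)
      (fun m => le_mul_of_one_le_left (norm_nonneg _) (le_add_of_nonneg_right (abs_nonneg _)))
  have hPle : ∀ j : ℤ, ‖P j‖ ≤ χ * ‖h j‖ + lam / 4 * (|(j:ℝ)| ^ (4:ℕ) * ‖PN N h j‖) := by
    intro j
    refine (norm_add_le _ _).trans ?_
    rw [norm_mul, norm_mul, norm_Dx]
    simp only [Complex.norm_real, Real.norm_eq_abs]
    rw [abs_of_pos hχ, abs_of_nonneg (by positivity : (0:ℝ) ≤ lam / 4)]
  set d1 : ℤ → ℝ := fun k => Real.sqrt δ *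
    (χ * (|(k:ℝ)| ^ (2:ℕ) * ‖h k‖) + lam / 4 * (|(k:ℝ)| ^ (6:ℕ) * ‖PN N h k‖)) with hd1_def
  have hd1nn : ∀ k : ℤ, 0 ≤ d1 k := fun k => mul_nonneg hsd
    (add_nonneg (mul_nonneg hχ.le (by positivity))
      (mul_nonneg (by positivity) (by positivity)))
  have hd1sum : Summable d1 := ((hA2.mul_left χ).add (hA6.mul_left (lam/4))).mul_left _
  have hd1tsum : ∑' k, d1 k = Real.sqrt δ *
      (χ * ∑' k : ℤ, |(k:ℝ)| ^ (2:ℕ) * ‖h k‖ +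
        lam / 4 * ∑' k : ℤ, |(k:ℝ)| ^ (6:ℕ) * ‖PN N h k‖) := by
    simp only [hd1_def]
    rw [tsum_mul_left, Summable.tsum_add (hA2.mul_left χ) (hA6.mul_left (lam/4)),
      tsum_mul_left, tsum_mul_left]
  have hc1le : ∀ k : ℤ, Real.sqrt δ * (|(k:ℝ)| ^ (2:ℕ) * ‖P k‖) ≤ d1 k := by
    intro k
    calc Real.sqrt δ * (|(k:ℝ)| ^ (2:ℕ) * ‖P k‖)
        ≤ Real.sqrt δ * (|(k:ℝ)| ^ (2:ℕ) *
            (χ * ‖h k‖ + lam / 4 * (|(k:ℝ)| ^ (4:ℕ) * ‖PN N h k‖))) :=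
          mul_le_mul_of_nonneg_left
            (mul_le_mul_of_nonneg_left (hPle k) (by positivity)) hsd
      _ = d1 k := by simp only [hd1_def]; ring
  have hgle : ∀ j : ℤ, ‖Dx 1 P j‖ ≤
      χ * (∑' m : ℤ, (1 + |(m:ℝ)|) * ‖h m‖) +
        lam / 4 * (∑' k : ℤ, |(k:ℝ)| ^ (6:ℕ) * ‖PN N h k‖) := by
    intro j
    rw [norm_Dx, pow_one]
    have e1 : |(j:ℝ)| * ‖h j‖ ≤ ∑' m : ℤ, (1 + |(m:ℝ)|) * ‖h m‖ :=
      le_trans (mul_le_mul_of_nonneg_right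
          (by linarith [abs_nonneg (j:ℝ)] : |(j:ℝ)| ≤ 1 + |(j:ℝ)|) (norm_nonneg _))
        (Summable.le_tsum hh1 j fun i _ => by positivity)
    have e2 : |(j:ℝ)| ^ (5:ℕ) * ‖PN N h j‖ ≤ ∑' k : ℤ, |(k:ℝ)| ^ (6:ℕ) * ‖PN N h k‖ :=
      le_trans (mul_le_mul_of_nonneg_right
          (abs_pow_mono (by norm_num) (by norm_num) j) (norm_nonneg _))
        (Summable.le_tsum hA6 j fun i _ => by positivity)
    calc |(j:ℝ)| * ‖P j‖
        ≤ |(j:ℝ)| * (χ * ‖h j‖ + lam / 4 * (|(j:ℝ)| ^ (4:ℕ) * ‖PN N h j‖)) :=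
          mul_le_mul_of_nonneg_left (hPle j) (abs_nonneg _)
      _ = χ * (|(j:ℝ)| * ‖h j‖) + lam / 4 * (|(j:ℝ)| ^ (5:ℕ) * ‖PN N h j‖) := by ring
      _ ≤ _ := add_le_add (mul_le_mul_of_nonneg_left e1 hχ.le)
          (mul_le_mul_of_nonneg_left e2 (by positivity))
  have hfg : ∀ k : ℤ, Summable fun m => ‖h m‖ * ‖Dx 1 P (k - m)‖ :=
    conv_slice_summable hh0 hgle
  have ha0 : ∀ m : ℤ, 0 ≤ ε * ((1 + |(m:ℝ)|) * ‖h m‖) := fun m => by positivity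
  have hb0 : ∀ j : ℤ, 0 ≤ 2 * d1 j := fun j => by linarith [hd1nn j]
  have hpt : ∀ (k m : ℤ), (Real.sqrt δ * ε * |(k:ℝ)|) * (‖h m‖ * ‖Dx 1 P (k - m)‖) ≤
      (ε * ((1 + |(m:ℝ)|) * ‖h m‖)) * (2 * d1 (k - m)) := by
    intro k m
    rw [norm_Dx, pow_one]
    have h12 : |((k - m : ℤ):ℝ)| ≤ |((k - m : ℤ):ℝ)| ^ (2:ℕ) := by
      have := abs_pow_mono (a := 1) (b := 2) (by norm_num) (by norm_num) (k - m)
      rwa [pow_one] at this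
    have hkj : |(k:ℝ)| * |((k - m : ℤ):ℝ)| ≤ (1 + |(m:ℝ)|) * (2 * |((k - m : ℤ):ℝ)| ^ (2:ℕ)) := by
      calc |(k:ℝ)| * |((k - m : ℤ):ℝ)|
          ≤ ((1 + |(m:ℝ)|) * (1 + |((k - m : ℤ):ℝ)|)) * |((k - m : ℤ):ℝ)| :=
            mul_le_mul_of_nonneg_right (hk_factor k m) (abs_nonneg _)
        _ = (1 + |(m:ℝ)|) * (|((k - m : ℤ):ℝ)| + |((k - m : ℤ):ℝ)| * |((k - m : ℤ):ℝ)|) := by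
            ring
        _ ≤ (1 + |(m:ℝ)|) * (2 * |((k - m : ℤ):ℝ)| ^ (2:ℕ)) := by
            refine mul_le_mul_of_nonneg_left ?_ (by positivity)
            have : |((k - m : ℤ):ℝ)| * |((k - m : ℤ):ℝ)| = |((k - m : ℤ):ℝ)| ^ (2:ℕ) := by ring
            linarith [h12]
    have hPj : |((k - m : ℤ):ℝ)| ^ (2:ℕ) * ‖P (k - m)‖ ≤
        χ * (|((k - m : ℤ):ℝ)| ^ (2:ℕ) * ‖h (k - m)‖) +
          lam / 4 * (|((k - m : ℤ):ℝ)| ^ (6:ℕ) * ‖PN N h (k - m)‖) := by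
      calc |((k - m : ℤ):ℝ)| ^ (2:ℕ) * ‖P (k - m)‖
          ≤ |((k - m : ℤ):ℝ)| ^ (2:ℕ) * (χ * ‖h (k - m)‖ +
              lam / 4 * (|((k - m : ℤ):ℝ)| ^ (4:ℕ) * ‖PN N h (k - m)‖)) :=
            mul_le_mul_of_nonneg_left (hPle _) (by positivity)
        _ = _ := by ring
    calc (Real.sqrt δ * ε * |(k:ℝ)|) * (‖h m‖ * (|((k - m : ℤ):ℝ)| * ‖P (k - m)‖))
        = (Real.sqrt δ * ε * ‖h m‖) * ((|(k:ℝ)| * |((k - m : ℤ):ℝ)|) * ‖P (k - m)‖) := by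
          ring
      _ ≤ (Real.sqrt δ * ε * ‖h m‖) *
            (((1 + |(m:ℝ)|) * (2 * |((k - m : ℤ):ℝ)| ^ (2:ℕ))) * ‖P (k - m)‖) :=
          mul_le_mul_of_nonneg_left
            (mul_le_mul_of_nonneg_right hkj (norm_nonneg _)) (by positivity)
      _ = (ε * ((1 + |(m:ℝ)|) * ‖h m‖)) *
            (Real.sqrt δ * 2 * (|((k - m : ℤ):ℝ)| ^ (2:ℕ) * ‖P (k - m)‖)) := by ring
      _ ≤ (ε * ((1 + |(m:ℝ)|) * ‖h m‖)) * (Real.sqrt δ * 2 *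
            (χ * (|((k - m : ℤ):ℝ)| ^ (2:ℕ) * ‖h (k - m)‖) +
              lam / 4 * (|((k - m : ℤ):ℝ)| ^ (6:ℕ) * ‖PN N h (k - m)‖))) :=
          mul_le_mul_of_nonneg_left
            (mul_le_mul_of_nonneg_left hPj (by positivity)) (ha0 m)
      _ = _ := by simp only [hd1_def]; ring
  obtain ⟨hs1, hs2⟩ := weighted_conv_bound (w := fun k : ℤ => Real.sqrt δ * ε * |(k:ℝ)|)
    (f := h) (g := Dx 1 P)
    (fun k => by positivity) ha0 hb0 (hh1.mul_left ε) (hd1sum.mul_left 2) hfg hpt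
  have hNle : ∀ k : ℤ, ‖NthinN δ ε χ lam N h k‖ ≤
      d1 k + (Real.sqrt δ * ε * |(k:ℝ)|) * ‖conv h (Dx 1 P) k‖ := by
    intro k
    rw [NthinN_expand]
    calc ‖((Real.sqrt δ : ℝ):ℂ) * (Complex.I * (k:ℂ)) *
          ((Complex.I * (k:ℂ)) * P k + (ε:ℂ) * conv h (Dx 1 P) k)‖
        = Real.sqrt δ * |(k:ℝ)| *
            ‖(Complex.I * (k:ℂ)) * P k + (ε:ℂ) * conv h (Dx 1 P) k‖ := by
          rw [norm_mul, norm_mul, Complex.norm_real, Real.norm_eq_abs,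
            abs_of_nonneg hsd, norm_I_int]
      _ ≤ Real.sqrt δ * |(k:ℝ)| *
            (‖(Complex.I * (k:ℂ)) * P k‖ + ‖(ε:ℂ) * conv h (Dx 1 P) k‖) :=
          mul_le_mul_of_nonneg_left (norm_add_le _ _) (by positivity)
      _ = Real.sqrt δ * (|(k:ℝ)| ^ (2:ℕ) * ‖P k‖) +
            (Real.sqrt δ * ε * |(k:ℝ)|) * ‖conv h (Dx 1 P) k‖ := by
          rw [norm_mul, norm_I_int, norm_mul, Complex.norm_real, Real.norm_eq_abs,
            abs_of_nonneg hε]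
          ring
      _ ≤ _ := add_le_add_left (hc1le k) _
  have hNsum : Summable (fun k => ‖NthinN δ ε χ lam N h k‖) :=
    (hd1sum.add hs1).of_nonneg_of_le (fun k => norm_nonneg _) hNle
  refine ⟨hNsum, ?_⟩
  calc ∑' k, ‖NthinN δ ε χ lam N h k‖
      ≤ ∑' k : ℤ, (d1 k + (Real.sqrt δ * ε * |(k:ℝ)|) * ‖conv h (Dx 1 P) k‖) :=
        Summable.tsum_le_tsum hNle hNsum (hd1sum.add hs1)
    _ = (∑' k, d1 k) + ∑' k : ℤ, (Real.sqrt δ * ε * |(k:ℝ)|) * ‖conv h (Dx 1 P) k‖ :=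
        Summable.tsum_add hd1sum hs1
    _ ≤ (∑' k, d1 k) + (∑' m : ℤ, ε * ((1 + |(m:ℝ)|) * ‖h m‖)) * (∑' j : ℤ, 2 * d1 j) :=
        add_le_add_right hs2 _
    _ = (∑' k, d1 k) + (ε * ∑' m : ℤ, (1 + |(m:ℝ)|) * ‖h m‖) * (2 * ∑' k, d1 k) := by
        have h2d : ∑' j : ℤ, 2 * d1 j = 2 * ∑' k, d1 k := tsum_mul_left
        have h2e : ∑' m : ℤ, ε * ((1 + |(m:ℝ)|) * ‖h m‖) =
            ε * ∑' m : ℤ, (1 + |(m:ℝ)|) * ‖h m‖ := tsum_mul_left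
        rw [h2d, h2e]
    _ = _ := by rw [hd1tsum]; ring

end TFAux3

namespace TFMain
open TFAux TFAux2 TFAux3
open scoped ENNReal NNReal

lemma memℓp_one {f : ℤ → ℂ} (hf : Summable fun k => ‖f k‖) : Memℓp f 1 :=
  memℓp_gen (by simpa using hf)

lemma lp_summable (f : lp (fun _ : ℤ => ℂ) 1) : Summable fun k => ‖f k‖ := by
  have h2 := (lp.memℓp f).summable (p := 1) (by simp)
  simpa [ENNReal.toReal_one] using h2

lemma lp_norm_eq (f : lp (fun _ : ℤ => ℂ) 1) : ‖f‖ = ∑' k, ‖f k‖ := by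
  rw [lp.norm_eq_tsum_rpow (p := 1) (by simp) f]
  simp [ENNReal.toReal_one, Real.rpow_one]

lemma weight_pt {f : Coeffs} (hf0 : f 0 = 0) {a b : ℕ} (hab : a ≤ b) (k : ℤ) :
    |(k:ℝ)| ^ a * ‖f k‖ ≤ |(k:ℝ)| ^ b * ‖f k‖ := by
  rcases eq_or_ne k 0 with rfl | hk
  · simp [hf0]
  · exact mul_le_mul_of_nonneg_right (pow_le_pow_right₀ (one_le_abs_cast hk) hab)
      (norm_nonneg _)

lemma Anorm_nat (n : ℕ) (f : Coeffs) :
    Anorm (n:ℝ) f = ∑' k : ℤ, |(k:ℝ)| ^ (n:ℕ) * ‖f k‖ :=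
  tsum_congr fun k => by rw [Real.rpow_natCast]

lemma InA_nat (n : ℕ) (f : Coeffs) :
    InA (n:ℝ) f ↔ Summable fun k : ℤ => |(k:ℝ)| ^ (n:ℕ) * ‖f k‖ :=
  summable_congr fun k => by rw [Real.rpow_natCast]

lemma Anorm_nonneg (s : ℝ) (f : Coeffs) : 0 ≤ Anorm s f :=
  tsum_nonneg fun k => mul_nonneg (Real.rpow_nonneg (abs_nonneg _) _)
    (norm_nonneg _)

end TFMain

open TFAux TFAux2 TFAux3 TFMain
set_option maxHeartbeats 1600000

/-- for zero-mean `h ∈ A⁶` small in `A¹`, the thin-film elliptic problem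
`L_h U = N^N_{δ,ε}(h)` admits a unique zero-mean solution `U ∈ A⁴`, with
`‖U‖_{A⁰} + (√δ Θ/2)‖U‖_{A⁴} ≤ C√δ ((1+‖h‖_{A⁰})(‖h‖_{A²}+‖P_N h‖_{A⁶}) + ‖h‖_{A¹}‖P_N h‖_{A⁵})`,
where `𝒞` and `C` are independent of `N`. -/
theorem thin_film_elliptic_solve (lam χ Θ δ ε : ℝ)
    (hlam : 0 < lam) (hχ : 0 < χ) (hΘ : 0 < Θ) (hδ : 0 < δ) (hε : 0 ≤ ε) :
    ∃ C₁ > 0, ∃ C > 0, ∀ N : ℕ, ∀ h : Coeffs, h 0 = 0 → InA 6 h → Anorm 1 h ≤ C₁ →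
      ∃ U : Coeffs,
        (U 0 = 0 ∧ InA 4 U ∧
          (∀ k : ℤ, Lthin δ Θ ε h U k = NthinN δ ε χ lam N h k) ∧
          Anorm 0 U + Real.sqrt δ * Θ / 2 * Anorm 4 U ≤
            C * Real.sqrt δ *
              ((1 + Anorm 0 h) * (Anorm 2 h + Anorm 6 (PN N h)) +
                Anorm 1 h * Anorm 5 (PN N h))) ∧
        (∀ U' : Coeffs, U' 0 = 0 → InA 4 U' →
          (∀ k : ℤ, Lthin δ Θ ε h U' k = NthinN δ ε χ lam N h k) → U' = U) := by
  have hsd : (0:ℝ) < Real.sqrt δ := Real.sqrt_pos.mpr hδ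
  have hs : (0:ℝ) < Real.sqrt δ * Θ := mul_pos hsd hΘ
  refine ⟨1/(8*(1+ε)), by positivity, 5*(χ+lam), by positivity, ?_⟩
  intro N h h0 hA6 hsmall
  -- summability of weighted norms of h
  have hA6' : Summable fun k : ℤ => |(k:ℝ)| ^ (6:ℕ) * ‖h k‖ := by
    have h6 : ((6:ℝ)) = ((6:ℕ):ℝ) := by norm_num
    rw [InA, h6] at hA6
    exact (InA_nat 6 h).mp hA6
  have hPN0 : PN N h 0 = 0 := by simp [PN, h0]
  have hPNle : ∀ k, ‖PN N h k‖ ≤ ‖h k‖ := by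
    intro k
    by_cases hc : |k| ≤ (N:ℤ) <;> simp [PN, hc]
  have hA6PN : Summable fun k : ℤ => |(k:ℝ)| ^ (6:ℕ) * ‖PN N h k‖ :=
    hA6'.of_nonneg_of_le (fun k => by positivity)
      (fun k => mul_le_mul_of_nonneg_left (hPNle k) (by positivity))
  have hA2 : Summable fun k : ℤ => |(k:ℝ)| ^ (2:ℕ) * ‖h k‖ :=
    hA6'.of_nonneg_of_le (fun k => by positivity) (weight_pt h0 (by norm_num))
  have hA1 : Summable fun k : ℤ => |(k:ℝ)| ^ (1:ℕ) * ‖h k‖ :=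
    hA6'.of_nonneg_of_le (fun k => by positivity) (weight_pt h0 (by norm_num))
  have hA0 : Summable fun k : ℤ => |(k:ℝ)| ^ (0:ℕ) * ‖h k‖ :=
    hA6'.of_nonneg_of_le (fun k => by positivity) (weight_pt h0 (by norm_num))
  have hh1 : Summable fun m : ℤ => (1 + |(m:ℝ)|) * ‖h m‖ := by
    refine (hA0.add hA1).congr fun k => ?_
    simp only [pow_zero, pow_one]
    ring
  have hh0 : Summable fun m : ℤ => ‖h m‖ :=
    hh1.of_nonneg_of_le (fun m => norm_nonneg _)
      (fun m => le_mul_of_one_le_left (norm_nonneg _) (le_add_of_nonneg_right (abs_nonneg _)))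
  -- smallness
  have hAnorm1 : Anorm 1 h = ∑' k : ℤ, |(k:ℝ)| ^ (1:ℕ) * ‖h k‖ := by
    rw [show (1:ℝ) = ((1:ℕ):ℝ) by norm_num]
    exact Anorm_nat 1 h
  have hT1nn : 0 ≤ ∑' m : ℤ, (1 + |(m:ℝ)|) * ‖h m‖ :=
    tsum_nonneg fun m => by positivity
  have hT1le : (∑' m : ℤ, (1 + |(m:ℝ)|) * ‖h m‖) ≤ 2 * Anorm 1 h := by
    have e : ∑' m : ℤ, (1 + |(m:ℝ)|) * ‖h m‖ =
        (∑' k : ℤ, |(k:ℝ)| ^ (0:ℕ) * ‖h k‖) + ∑' k : ℤ, |(k:ℝ)| ^ (1:ℕ) * ‖h k‖ := by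
      rw [← Summable.tsum_add hA0 hA1]
      refine tsum_congr fun k => ?_
      simp only [pow_zero, pow_one]
      ring
    have h01 : (∑' k : ℤ, |(k:ℝ)| ^ (0:ℕ) * ‖h k‖) ≤ ∑' k : ℤ, |(k:ℝ)| ^ (1:ℕ) * ‖h k‖ :=
      Summable.tsum_le_tsum (weight_pt h0 (by norm_num)) hA0 hA1
    rw [e, hAnorm1]
    linarith
  have hεT1 : ε * (∑' m : ℤ, (1 + |(m:ℝ)|) * ‖h m‖) ≤ 1/4 := by
    have h1 : (∑' m : ℤ, (1 + |(m:ℝ)|) * ‖h m‖) ≤ 1/(4*(1+ε)) := by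
      have : 2 * Anorm 1 h ≤ 2 * (1/(8*(1+ε))) := by linarith
      calc (∑' m : ℤ, (1 + |(m:ℝ)|) * ‖h m‖) ≤ 2 * Anorm 1 h := hT1le
        _ ≤ 2 * (1/(8*(1+ε))) := this
        _ = 1/(4*(1+ε)) := by field_simp; ring
    calc ε * (∑' m : ℤ, (1 + |(m:ℝ)|) * ‖h m‖) ≤ ε * (1/(4*(1+ε))) :=
        mul_le_mul_of_nonneg_left h1 hε
      _ ≤ 1/4 := by
          rw [mul_one_div, div_le_div_iff₀ (by positivity) (by norm_num)]
          linarith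
  -- Banach fixed point setup
  obtain ⟨hgsum, hgbd⟩ := NthinN_bound hδ hε hχ hlam N h hh1 hA2 hA6PN
  have hcontr : ∀ V : Coeffs, (Summable fun k => ‖V k‖) →
      Summable (fun k => ‖Bop δ Θ ε h V k‖) ∧
        ∑' k, ‖Bop δ Θ ε h V k‖ ≤ (1/2) * ∑' k, ‖V k‖ := by
    intro V hV
    obtain ⟨b1, b2⟩ := Bop_bound hδ hΘ hε h V hh1 hV
    refine ⟨b1, b2.trans ?_⟩
    have hVnn : 0 ≤ ∑' k, ‖V k‖ := tsum_nonneg fun k => norm_nonneg _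
    nlinarith [mul_le_mul_of_nonneg_right hεT1 hVnn]
  haveI : Fact ((1:ENNReal) ≤ 1) := ⟨le_refl _⟩
  haveI : Nonempty (lp (fun _ : ℤ => ℂ) 1) := ⟨0⟩
  have hmem : ∀ V : lp (fun _ : ℤ => ℂ) 1,
      Memℓp (fun k => NthinN δ ε χ lam N h k - Bop δ Θ ε h (⇑V) k) 1 := by
    intro V
    refine memℓp_one (Summable.of_nonneg_of_le (fun k => norm_nonneg _)
      (fun k => norm_sub_le _ _) (hgsum.add (hcontr _ (lp_summable V)).1))
  set Φ : lp (fun _ : ℤ => ℂ) 1 → lp (fun _ : ℤ => ℂ) 1 :=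
    fun V => ⟨fun k => NthinN δ ε χ lam N h k - Bop δ Θ ε h (⇑V) k, hmem V⟩ with hΦ_def
  have hΦcoe : ∀ (V : lp (fun _ : ℤ => ℂ) 1) (k : ℤ),
      (⇑(Φ V)) k = NthinN δ ε χ lam N h k - Bop δ Θ ε h (⇑V) k := fun V k => rfl
  have hΦlip : ContractingWith (1/2 : NNReal) Φ := by
    constructor
    · rw [← NNReal.coe_lt_coe]
      norm_num
    · refine LipschitzWith.of_dist_le_mul fun x y => ?_
      rw [dist_eq_norm, dist_eq_norm, lp_norm_eq, lp_norm_eq]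
      have hyx : ⇑(y - x) = fun j => (⇑y) j - (⇑x) j := by
        rw [lp.coeFn_sub]; rfl
      have hxy : ∀ k, (⇑(Φ x - Φ y)) k = Bop δ Θ ε h (⇑(y - x)) k := by
        intro k
        rw [lp.coeFn_sub, Pi.sub_apply, hΦcoe, hΦcoe, hyx]
        rw [show NthinN δ ε χ lam N h k - Bop δ Θ ε h (⇑x) k -
            (NthinN δ ε χ lam N h k - Bop δ Θ ε h (⇑y) k) =
            Bop δ Θ ε h (⇑y) k - Bop δ Θ ε h (⇑x) k from by ring]
        exact Bop_sub hδ hΘ h (⇑y) (⇑x) hh0 (lp_summable y) (lp_summable x) k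
      calc ∑' k, ‖(⇑(Φ x - Φ y)) k‖ = ∑' k, ‖Bop δ Θ ε h (⇑(y - x)) k‖ :=
            tsum_congr fun k => by rw [hxy]
        _ ≤ (1/2) * ∑' k, ‖(⇑(y - x)) k‖ := (hcontr _ (lp_summable (y - x))).2
        _ = ((1/2 : NNReal) : ℝ) * ∑' k, ‖(⇑(x - y)) k‖ := by
            have hcongr : ∑' k, ‖(⇑(y - x)) k‖ = ∑' k, ‖(⇑(x - y)) k‖ :=
              tsum_congr fun k => by
                rw [lp.coeFn_sub, lp.coeFn_sub, Pi.sub_apply, Pi.sub_apply, norm_sub_rev]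
            rw [hcongr]
            norm_num
  set Vfix : lp (fun _ : ℤ => ℂ) 1 := ContractingWith.fixedPoint Φ hΦlip with hVfix_def
  have hfix : Function.IsFixedPt Φ Vfix := ContractingWith.fixedPoint_isFixedPt hΦlip
  have hVk : ∀ k, NthinN δ ε χ lam N h k - Bop δ Θ ε h (⇑Vfix) k = (⇑Vfix) k := by
    intro k
    conv_rhs => rw [← hfix]
  have hVsum : Summable fun k => ‖(⇑Vfix) k‖ := lp_summable Vfix
  have hVnn : 0 ≤ ∑' k, ‖(⇑Vfix) k‖ := tsum_nonneg fun k => norm_nonneg _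
  have hBfix := hcontr _ hVsum
  have hVbd : ∑' k, ‖(⇑Vfix) k‖ ≤ 2 * ∑' k, ‖NthinN δ ε χ lam N h k‖ := by
    have h1 : ∀ k, ‖(⇑Vfix) k‖ ≤ ‖NthinN δ ε χ lam N h k‖ + ‖Bop δ Θ ε h (⇑Vfix) k‖ := by
      intro k
      rw [← hVk k]
      exact norm_sub_le _ _
    have h2 := Summable.tsum_le_tsum h1 hVsum (hgsum.add hBfix.1)
    rw [Summable.tsum_add hgsum hBfix.1] at h2
    linarith [hBfix.2]
  clear_value Vfix
  -- properties of U := LstarInv δ Θ ⇑Vfix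
  have hqne : ∀ k : ℤ, ((qw δ Θ k : ℝ) : ℂ) ≠ 0 :=
    fun k => Complex.ofReal_ne_zero.mpr (qw_pos hΘ.le k).ne'
  have hg0 : NthinN δ ε χ lam N h 0 = 0 := by
    rw [NthinN_expand]
    simp
  have hB0 : ∀ V : Coeffs, Bop δ Θ ε h V 0 = 0 := by
    intro V
    simp [Bop]
  have hV0 : (⇑Vfix) 0 = 0 := by
    rw [← hVk 0, hg0, hB0]
    ring
  have hU4pt : ∀ k : ℤ, |(k:ℝ)| ^ (4:ℕ) * ‖LstarInv δ Θ (⇑Vfix) k‖ ≤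
      (Real.sqrt δ * Θ)⁻¹ * ‖(⇑Vfix) k‖ := by
    intro k
    rw [norm_LstarInv hΘ.le]
    have hq := qw_pos (δ := δ) hΘ.le k
    have h4 : |(k:ℝ)| ^ (4:ℕ) ≤ (Real.sqrt δ * Θ)⁻¹ * qw δ Θ k := by
      rw [← div_eq_inv_mul]
      exact (le_div_iff₀' hs).mpr (s_abs4_le_qw k)
    calc |(k:ℝ)| ^ (4:ℕ) * (‖(⇑Vfix) k‖ / qw δ Θ k)
        ≤ ((Real.sqrt δ * Θ)⁻¹ * qw δ Θ k) * (‖(⇑Vfix) k‖ / qw δ Θ k) :=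
          mul_le_mul_of_nonneg_right h4 (div_nonneg (norm_nonneg _) hq.le)
      _ = (Real.sqrt δ * Θ)⁻¹ * ‖(⇑Vfix) k‖ := by field_simp
  have hU4 : Summable fun k : ℤ => |(k:ℝ)| ^ (4:ℕ) * ‖LstarInv δ Θ (⇑Vfix) k‖ :=
    (hVsum.mul_left ((Real.sqrt δ * Θ)⁻¹)).of_nonneg_of_le
      (fun k => by positivity) hU4pt
  have hU0pt : ∀ k : ℤ, ‖LstarInv δ Θ (⇑Vfix) k‖ ≤ ‖(⇑Vfix) k‖ := by
    intro k
    rw [norm_LstarInv hΘ.le]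
    exact div_le_self (norm_nonneg _) (one_le_qw hΘ.le k)
  have hU0 : Summable fun k : ℤ => ‖LstarInv δ Θ (⇑Vfix) k‖ :=
    hVsum.of_nonneg_of_le (fun k => norm_nonneg _) hU0pt
  have hqU : ∀ k : ℤ, ((qw δ Θ k : ℝ) : ℂ) * LstarInv δ Θ (⇑Vfix) k = (⇑Vfix) k := by
    intro k
    rw [LstarInv,
      show ((1 + Real.sqrt δ * Θ * (k:ℝ) ^ (4:ℕ) : ℝ) : ℂ) = ((qw δ Θ k : ℝ) : ℂ) from rfl,
      mul_comm, div_mul_cancel₀ _ (hqne k)]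
  refine ⟨LstarInv δ Θ (⇑Vfix), ⟨?_, ?_, ?_, ?_⟩, ?_⟩
  · -- U 0 = 0
    simp [LstarInv, hV0]
  · -- InA 4 U
    rw [InA, show ((4:ℝ)) = ((4:ℕ):ℝ) by norm_num]
    exact (InA_nat 4 _).mpr hU4
  · -- the equation
    intro k
    calc Lthin δ Θ ε h (LstarInv δ Θ (⇑Vfix)) k
        = ((qw δ Θ k : ℝ) : ℂ) * LstarInv δ Θ (⇑Vfix) k + Bop δ Θ ε h (⇑Vfix) k :=
          Lthin_expand δ Θ ε h _ k
      _ = (⇑Vfix) k + Bop δ Θ ε h (⇑Vfix) k := by rw [hqU]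
      _ = NthinN δ ε χ lam N h k := by rw [← hVk k]; ring
  · -- the norm bound
    have hAnorm0U : Anorm 0 (LstarInv δ Θ (⇑Vfix)) =
        ∑' k : ℤ, ‖LstarInv δ Θ (⇑Vfix) k‖ := by
      rw [show ((0:ℝ)) = ((0:ℕ):ℝ) by norm_num, Anorm_nat]
      exact tsum_congr fun k => by rw [pow_zero, one_mul]
    have hAnorm4U : Anorm 4 (LstarInv δ Θ (⇑Vfix)) =
        ∑' k : ℤ, |(k:ℝ)| ^ (4:ℕ) * ‖LstarInv δ Θ (⇑Vfix) k‖ := by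
      rw [show ((4:ℝ)) = ((4:ℕ):ℝ) by norm_num, Anorm_nat]
    have hb0 : Anorm 0 (LstarInv δ Θ (⇑Vfix)) ≤ ∑' k, ‖(⇑Vfix) k‖ := by
      rw [hAnorm0U]
      exact Summable.tsum_le_tsum hU0pt hU0 hVsum
    have hb4 : Anorm 4 (LstarInv δ Θ (⇑Vfix)) ≤ (Real.sqrt δ * Θ)⁻¹ * ∑' k, ‖(⇑Vfix) k‖ := by
      rw [hAnorm4U]
      calc ∑' k : ℤ, |(k:ℝ)| ^ (4:ℕ) * ‖LstarInv δ Θ (⇑Vfix) k‖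
          ≤ ∑' k : ℤ, (Real.sqrt δ * Θ)⁻¹ * ‖(⇑Vfix) k‖ :=
            Summable.tsum_le_tsum hU4pt hU4 (hVsum.mul_left _)
        _ = (Real.sqrt δ * Θ)⁻¹ * ∑' k, ‖(⇑Vfix) k‖ := tsum_mul_left
    -- combine
    have hS2eq : Anorm 2 h = ∑' k : ℤ, |(k:ℝ)| ^ (2:ℕ) * ‖h k‖ := by
      rw [show ((2:ℝ)) = ((2:ℕ):ℝ) by norm_num, Anorm_nat]
    have hS6eq : Anorm 6 (PN N h) = ∑' k : ℤ, |(k:ℝ)| ^ (6:ℕ) * ‖PN N h k‖ := by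
      rw [show ((6:ℝ)) = ((6:ℕ):ℝ) by norm_num, Anorm_nat]
    have hS2nn : 0 ≤ ∑' k : ℤ, |(k:ℝ)| ^ (2:ℕ) * ‖h k‖ := tsum_nonneg fun k => by positivity
    have hS6nn : 0 ≤ ∑' k : ℤ, |(k:ℝ)| ^ (6:ℕ) * ‖PN N h k‖ :=
      tsum_nonneg fun k => by positivity
    have hGnn : 0 ≤ ∑' k, ‖NthinN δ ε χ lam N h k‖ := tsum_nonneg fun k => norm_nonneg _
    have hXnn : 0 ≤ χ * (∑' k : ℤ, |(k:ℝ)| ^ (2:ℕ) * ‖h k‖) +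
        lam / 4 * ∑' k : ℤ, |(k:ℝ)| ^ (6:ℕ) * ‖PN N h k‖ := by positivity
    have hG32 : ∑' k, ‖NthinN δ ε χ lam N h k‖ ≤
        Real.sqrt δ * (3/2) * (χ * (∑' k : ℤ, |(k:ℝ)| ^ (2:ℕ) * ‖h k‖) +
          lam / 4 * ∑' k : ℤ, |(k:ℝ)| ^ (6:ℕ) * ‖PN N h k‖) := by
      refine hgbd.trans ?_
      have hfac : Real.sqrt δ * (1 + 2 * (ε * ∑' m : ℤ, (1 + |(m:ℝ)|) * ‖h m‖)) ≤
          Real.sqrt δ * (3/2) := by nlinarith [hεT1, hsd.le]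
      exact mul_le_mul_of_nonneg_right hfac hXnn
    -- main chain
    have hmain : Anorm 0 (LstarInv δ Θ (⇑Vfix)) +
        Real.sqrt δ * Θ / 2 * Anorm 4 (LstarInv δ Θ (⇑Vfix)) ≤
        3 * ∑' k, ‖NthinN δ ε χ lam N h k‖ := by
      have hinv : Real.sqrt δ * Θ / 2 * ((Real.sqrt δ * Θ)⁻¹ * ∑' k, ‖(⇑Vfix) k‖) =
          (1/2) * ∑' k, ‖(⇑Vfix) k‖ := by
        rw [show Real.sqrt δ * Θ / 2 * ((Real.sqrt δ * Θ)⁻¹ * ∑' k, ‖(⇑Vfix) k‖) =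
          (Real.sqrt δ * Θ * (Real.sqrt δ * Θ)⁻¹) * (∑' k, ‖(⇑Vfix) k‖) / 2 from by ring,
          mul_inv_cancel₀ hs.ne']
        ring
      have h4' : Real.sqrt δ * Θ / 2 * Anorm 4 (LstarInv δ Θ (⇑Vfix)) ≤
          (1/2) * ∑' k, ‖(⇑Vfix) k‖ := by
        rw [← hinv]
        exact mul_le_mul_of_nonneg_left hb4 (by positivity)
      calc Anorm 0 (LstarInv δ Θ (⇑Vfix)) +
            Real.sqrt δ * Θ / 2 * Anorm 4 (LstarInv δ Θ (⇑Vfix))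
          ≤ (3/2) * ∑' k, ‖(⇑Vfix) k‖ := by linarith
        _ ≤ 3 * ∑' k, ‖NthinN δ ε χ lam N h k‖ := by linarith [hVbd]
    refine hmain.trans ?_
    rw [hS2eq, hS6eq]
    have hA0nn := Anorm_nonneg 0 h
    have hA1nn := Anorm_nonneg 1 h
    have hA5nn := Anorm_nonneg 5 (PN N h)
    have hRA : (∑' k : ℤ, |(k:ℝ)| ^ (2:ℕ) * ‖h k‖) +
        (∑' k : ℤ, |(k:ℝ)| ^ (6:ℕ) * ‖PN N h k‖) ≤
        (1 + Anorm 0 h) * ((∑' k : ℤ, |(k:ℝ)| ^ (2:ℕ) * ‖h k‖) +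
          (∑' k : ℤ, |(k:ℝ)| ^ (6:ℕ) * ‖PN N h k‖)) +
          Anorm 1 h * Anorm 5 (PN N h) := by
      nlinarith [mul_nonneg hA1nn hA5nn, mul_nonneg hA0nn (add_nonneg hS2nn hS6nn)]
    refine (mul_le_mul_of_nonneg_left hG32 (by norm_num : (0:ℝ) ≤ 3)).trans ?_
    have hfl : (0:ℝ) ≤ χ + lam := by positivity
    nlinarith [mul_le_mul_of_nonneg_left hRA (mul_nonneg hsd.le hfl),
      mul_nonneg hsd.le (mul_nonneg hχ.le hS6nn),
      mul_nonneg hsd.le (mul_nonneg hlam.le hS2nn),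
      mul_nonneg hsd.le (mul_nonneg hlam.le hS6nn),
      mul_nonneg hsd.le (mul_nonneg hχ.le hS2nn)]
  · -- uniqueness
    intro U' hU'0 hU'4 hU'eq
    have hU4n : Summable fun k : ℤ => |(k:ℝ)| ^ (4:ℕ) * ‖U' k‖ := by
      rw [InA, show ((4:ℝ)) = ((4:ℕ):ℝ) by norm_num] at hU'4
      exact (InA_nat 4 _).mp hU'4
    have hU0n : Summable fun k : ℤ => ‖U' k‖ := by
      refine hU4n.of_nonneg_of_le (fun k => norm_nonneg _) fun k => ?_
      rcases eq_or_ne k 0 with rfl | hk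
      · simp [hU'0]
      · have h1 : (1:ℝ) ≤ |(k:ℝ)| ^ (4:ℕ) := one_le_pow₀ (one_le_abs_cast hk)
        exact le_mul_of_one_le_left (norm_nonneg _) h1
    set V' : Coeffs := fun k => ((qw δ Θ k : ℝ) : ℂ) * U' k with hV'_def
    have hLV' : LstarInv δ Θ V' = U' := by
      funext k
      rw [LstarInv,
        show ((1 + Real.sqrt δ * Θ * (k:ℝ) ^ (4:ℕ) : ℝ) : ℂ) = ((qw δ Θ k : ℝ) : ℂ) from rfl]
      exact mul_div_cancel_left₀ _ (hqne k)
    have hV'sum : Summable fun k => ‖V' k‖ := by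
      have he : ∀ k : ℤ, ‖U' k‖ + (Real.sqrt δ * Θ) * (|(k:ℝ)| ^ (4:ℕ) * ‖U' k‖) = ‖V' k‖ := by
        intro k
        rw [hV'_def]
        simp only []
        rw [norm_mul, Complex.norm_real, Real.norm_eq_abs, abs_of_pos (qw_pos hΘ.le k), qw,
          ← abs_pow_four]
        ring
      exact (hU0n.add ((hU4n.mul_left (Real.sqrt δ * Θ)))).congr he
    have hfix' : Function.IsFixedPt Φ (⟨V', memℓp_one hV'sum⟩ : lp (fun _ : ℤ => ℂ) 1) := by
      refine Subtype.ext (funext fun k => ?_)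
      show NthinN δ ε χ lam N h k - Bop δ Θ ε h V' k = V' k
      have heq := hU'eq k
      rw [Lthin_expand] at heq
      have hBV' : Bop δ Θ ε h V' k =
          ((Real.sqrt δ * Θ * ε : ℝ) : ℂ) * (Complex.I * (k:ℂ)) * conv h (Dx 3 U') k := by
        rw [Bop, hLV']
      rw [hBV', hV'_def]
      linear_combination -heq
    have huniq := ContractingWith.fixedPoint_unique hΦlip hfix'
    have hcoe : V' = ⇑Vfix := by
      rw [hVfix_def, ← huniq]
    funext k
    rw [← hLV', hcoe]
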